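/- Let p be an odd prime. Then τ(T_{p×p}) = p + 1; that is, the maximum size of a subset of T_{p×p} with no three points on a common line is exactly p + 1. -/

import Mathlib

/-- Projection `π_{m,n} : ℤ×ℤ → (ℤ/mℤ)×(ℤ/nℤ)`. -/
def torusProj (m n : ℕ) (P : ℤ × ℤ) : ZMod m × ZMod n :=
  ((P.1 : ZMod m), (P.2 : ZMod n))

/-- `L` is a line on the discrete torus `T_{m×n}`: the image under `π_{m,n}`
of `{(a+uk, b+vk) : k ∈ ℤ}` with `gcd(u,v)=1`. -/
def IsTorusLine (m n : ℕ) (L : Set (ZMod m × ZMod n)) : Prop :=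
  ∃ a b u v : ℤ, Int.gcd u v = 1 ∧
    L = torusProj m n '' {P : ℤ × ℤ | ∃ k : ℤ, P = (a + u * k, b + v * k)}

/-- `X` satisfies the no-three-in-line condition on `T_{m×n}`:
no three distinct points of `X` lie on a common line. -/
def NoThreeInLine (m n : ℕ) (X : Set (ZMod m × ZMod n)) : Prop :=
  ∀ L : Set (ZMod m × ZMod n), IsTorusLine m n L →
    ∀ A ∈ X, ∀ B ∈ X, ∀ C ∈ X,
      A ∈ L → B ∈ L → C ∈ L → A = B ∨ A = C ∨ B = C

/-- `τ(T_{m×n})`: the maximum cardinality of a subset of `T_{m×n}`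
satisfying the no-three-in-line condition. -/
noncomputable def tau (m n : ℕ) : ℕ :=
  sSup {k : ℕ | ∃ X : Set (ZMod m × ZMod n), NoThreeInLine m n X ∧ X.ncard = k}

/-- The reduction map `ρ : T_{m×n} → T_{p×p}` (for `p ∣ m`, `p ∣ n`). -/
def torusRed (m n p : ℕ) (hm : p ∣ m) (hn : p ∣ n)
    (q : ZMod m × ZMod n) : ZMod p × ZMod p :=
  (ZMod.castHom hm (ZMod p) q.1, ZMod.castHom hn (ZMod p) q.2)

/-- The determinant `D(A,B,C)` with rows `(1,1,1)`, x-coords, y-coords. -/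
def detD (A B C : ℤ × ℤ) : ℤ :=
  Matrix.det !![1, 1, 1; A.1, B.1, C.1; A.2, B.2, C.2]

/-! ### Auxiliary development -/

namespace TauAux

/-- Affine collinearity predicate (cross-product form). -/
def Col {p : ℕ} (A B C : ZMod p × ZMod p) : Prop :=
  (B.1 - A.1) * (C.2 - A.2) = (B.2 - A.2) * (C.1 - A.1)

variable {p : ℕ} [hpf : Fact p.Prime]

lemma val_cast (x : ZMod p) : ((x.val : ℕ) : ZMod p) = x := by
  haveI : NeZero p := ⟨hpf.out.ne_zero⟩
  rw [ZMod.natCast_val, ZMod.cast_id]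

/-- Any three points on a torus line are `Col`. -/
lemma col_of_mem_line {L : Set (ZMod p × ZMod p)} (hL : IsTorusLine p p L)
    {A B C : ZMod p × ZMod p} (hA : A ∈ L) (hB : B ∈ L) (hC : C ∈ L) :
    Col A B C := by
  obtain ⟨a, b, u, v, -, rfl⟩ := hL
  obtain ⟨PA, ⟨k1, rfl⟩, rfl⟩ := hA
  obtain ⟨PB, ⟨k2, rfl⟩, rfl⟩ := hB
  obtain ⟨PC, ⟨k3, rfl⟩, rfl⟩ := hC
  simp only [Col, torusProj]
  push_cast
  ring

/-- Through two distinct points there is a torus line containing every point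
`Col` with them. -/
lemma exists_line_through (A B : ZMod p × ZMod p) (hAB : A ≠ B) :
    ∃ L, IsTorusLine p p L ∧ ∀ C, Col A B C → C ∈ L := by
  by_cases hx : B.1 = A.1
  · -- vertical line
    have hy : B.2 ≠ A.2 := by
      intro h; exact hAB (Prod.ext hx h).symm
    refine ⟨torusProj p p '' {P : ℤ × ℤ | ∃ k : ℤ,
        P = ((A.1.val : ℤ) + 0 * k, 0 + 1 * k)},
      ⟨A.1.val, 0, 0, 1, by simp, rfl⟩, ?_⟩
    intro C hC
    have hC1 : C.1 = A.1 := by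
      have : (B.2 - A.2) * (C.1 - A.1) = 0 := by
        rw [← hC]; rw [hx]; ring
      rcases mul_eq_zero.mp this with h | h
      · exact absurd (sub_eq_zero.mp h) hy
      · exact sub_eq_zero.mp h
    refine ⟨((A.1.val : ℤ) + 0 * (C.2.val : ℤ), 0 + 1 * (C.2.val : ℤ)),
      ⟨(C.2.val : ℤ), rfl⟩, ?_⟩
    simp only [torusProj]
    push_cast
    rw [Prod.ext_iff]
    constructor
    · simp only [val_cast]
      linear_combination (-1 : ZMod p) * hC1
    · simp only [val_cast]
      ring
  · -- slope line
    have hxd : B.1 - A.1 ≠ 0 := sub_ne_zero.mpr hx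
    set m : ZMod p := (B.2 - A.2) / (B.1 - A.1) with hm
    refine ⟨torusProj p p '' {P : ℤ × ℤ | ∃ k : ℤ,
        P = ((A.1.val : ℤ) + 1 * k, (A.2.val : ℤ) + (m.val : ℤ) * k)},
      ⟨A.1.val, A.2.val, 1, m.val, by simp, rfl⟩, ?_⟩
    intro C hC
    have hCs : C.2 - A.2 = m * (C.1 - A.1) := by
      rw [hm, div_mul_eq_mul_div, eq_div_iff hxd]
      rw [mul_comm (C.2 - A.2) (B.1 - A.1)]
      exact hC
    refine ⟨((A.1.val : ℤ) + 1 * ((C.1 - A.1).val : ℤ),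
        (A.2.val : ℤ) + (m.val : ℤ) * ((C.1 - A.1).val : ℤ)),
      ⟨((C.1 - A.1).val : ℤ), rfl⟩, ?_⟩
    simp only [torusProj]
    push_cast
    rw [Prod.ext_iff]
    constructor
    · simp only [val_cast]
      ring
    · simp only [val_cast]
      linear_combination -hCs

/-- `NoThreeInLine` is equivalent to the `Col` condition. -/
lemma noThree_iff (X : Set (ZMod p × ZMod p)) :
    NoThreeInLine p p X ↔
      ∀ A ∈ X, ∀ B ∈ X, ∀ C ∈ X, Col A B C → A = B ∨ A = C ∨ B = C := by
  constructor
  · intro h A hA B hB C hC hcol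
    by_contra hne
    push_neg at hne
    obtain ⟨hAB, hAC, hBC⟩ := hne
    obtain ⟨L, hL, hmem⟩ := exists_line_through A B hAB
    have hAL : A ∈ L := hmem A (by simp [Col])
    have hBL : B ∈ L := hmem B (by simp [Col]; ring)
    have hCL : C ∈ L := hmem C hcol
    rcases h L hL A hA B hB C hC hAL hBL hCL with h' | h' | h'
    exacts [hAB h', hAC h', hBC h']
  · intro h L hL A hA B hB C hC hAL hBL hCL
    exact h A hA B hB C hC (col_of_mem_line hL hAL hBL hCL)

/-! ### Lines through a point, fibered by direction -/

/-- The direction ("key") of `Q` as seen from `A`. -/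
def key (A Q : ZMod p × ZMod p) : Option (ZMod p) :=
  if Q.1 = A.1 then none else some ((Q.2 - A.2) / (Q.1 - A.1))

/-- The line through `A` with direction `d` (as a predicate). -/
def lineF (A : ZMod p × ZMod p) (d : Option (ZMod p)) (Q : ZMod p × ZMod p) : Prop :=
  match d with
  | none => Q.1 = A.1
  | some m => Q.2 - A.2 = m * (Q.1 - A.1)

lemma lineF_self (A : ZMod p × ZMod p) (d : Option (ZMod p)) : lineF A d A := by
  cases d <;> simp [lineF]

lemma lineF_iff_key {A Q : ZMod p × ZMod p} (hQA : Q ≠ A) (d : Option (ZMod p)) :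
    lineF A d Q ↔ key A Q = d := by
  cases d with
  | none =>
    simp only [lineF, key]
    constructor
    · intro h; simp [h]
    · intro h
      by_contra hne
      simp [hne] at h
  | some m =>
    simp only [lineF, key]
    by_cases h1 : Q.1 = A.1
    · simp only [h1, if_pos rfl]
      have h2 : Q.2 ≠ A.2 := by
        intro h2; exact hQA (Prod.ext h1 h2)
      constructor
      · intro h
        exfalso
        apply h2
        have : Q.2 - A.2 = 0 := by rw [h]; ring
        exact sub_eq_zero.mp this
      · intro h; exact absurd h (by simp)
    · have hne : Q.1 - A.1 ≠ 0 := sub_ne_zero.mpr h1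
      simp only [if_neg h1, Option.some_inj]
      rw [div_eq_iff hne]

lemma lineF_col {A : ZMod p × ZMod p} {d : Option (ZMod p)}
    {Q R S : ZMod p × ZMod p} (hQ : lineF A d Q) (hR : lineF A d R)
    (hS : lineF A d S) : Col Q R S := by
  cases d with
  | none =>
    simp only [lineF] at hQ hR hS
    simp only [Col, hQ, hR, hS]
    ring
  | some m =>
    simp only [lineF] at hQ hR hS
    simp only [Col]
    linear_combination (R.1 - Q.1) * hS - (R.1 - Q.1) * hQ
      - (S.1 - Q.1) * hR + (S.1 - Q.1) * hQ

lemma lineF_trans {A Q : ZMod p × ZMod p} {d : Option (ZMod p)}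
    (hQ : lineF A d Q) (R : ZMod p × ZMod p) : lineF Q d R ↔ lineF A d R := by
  cases d with
  | none =>
    simp only [lineF] at *
    rw [hQ]
  | some m =>
    simp only [lineF] at *
    constructor
    · intro h; linear_combination h + hQ
    · intro h; linear_combination h - hQ

/-! ### The upper bound -/

lemma fiber_card_le_one {Y : Finset (ZMod p × ZMod p)}
    (hY3 : ∀ Q ∈ Y, ∀ R ∈ Y, ∀ S ∈ Y, Col Q R S → Q = R ∨ Q = S ∨ R = S)
    {B : ZMod p × ZMod p} (hB : B ∈ Y) (d : Option (ZMod p)) :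
    ((Y.erase B).filter (fun Q => key B Q = d)).card ≤ 1 := by
  by_contra h
  push_neg at h
  obtain ⟨Q, hQ, R, hR, hQR⟩ := Finset.one_lt_card.mp h
  simp only [Finset.mem_filter, Finset.mem_erase] at hQ hR
  have hQl : lineF B d Q := (lineF_iff_key hQ.1.1 d).mpr hQ.2
  have hRl : lineF B d R := (lineF_iff_key hR.1.1 d).mpr hR.2
  rcases hY3 B hB Q hQ.1.2 R hR.1.2 (lineF_col (lineF_self B d) hQl hRl) with
    h' | h' | h'
  exacts [hQ.1.1 h'.symm, hR.1.1 h'.symm, hQR h']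

lemma fiber_card_eq_one {Y : Finset (ZMod p × ZMod p)}
    (hY3 : ∀ Q ∈ Y, ∀ R ∈ Y, ∀ S ∈ Y, Col Q R S → Q = R ∨ Q = S ∨ R = S)
    (hcard : Y.card = p + 2)
    {B : ZMod p × ZMod p} (hB : B ∈ Y) (d : Option (ZMod p)) :
    ((Y.erase B).filter (fun Q => key B Q = d)).card = 1 := by
  have hsum : (Y.erase B).card =
      ∑ e : Option (ZMod p), ((Y.erase B).filter (fun Q => key B Q = e)).card :=
    Finset.card_eq_sum_card_fiberwise (fun x _ => Finset.mem_univ _)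
  have hec : (Y.erase B).card = p + 1 := by
    rw [Finset.card_erase_of_mem hB, hcard]; omega
  have hcardopt : Fintype.card (Option (ZMod p)) = p + 1 := by
    simp [ZMod.card]
  by_contra hne
  have h0 : ((Y.erase B).filter (fun Q => key B Q = d)).card = 0 := by
    have := fiber_card_le_one hY3 hB d
    omega
  have hd : d ∈ Finset.univ (α := Option (ZMod p)) := Finset.mem_univ d
  rw [← Finset.add_sum_erase _ _ hd, h0, zero_add] at hsum
  have hle : ∑ e ∈ Finset.univ.erase d,
      ((Y.erase B).filter (fun Q => key B Q = e)).card ≤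
      (Finset.univ.erase d).card • 1 :=
    Finset.sum_le_card_nsmul _ _ 1 (fun e _ => fiber_card_le_one hY3 hB e)
  rw [Finset.card_erase_of_mem hd, Finset.card_univ, hcardopt] at hle
  simp only [smul_eq_mul, mul_one] at hle
  omega

lemma fiberA_even {Y : Finset (ZMod p × ZMod p)}
    (hY3 : ∀ Q ∈ Y, ∀ R ∈ Y, ∀ S ∈ Y, Col Q R S → Q = R ∨ Q = S ∨ R = S)
    (hcard : Y.card = p + 2)
    {A : ZMod p × ZMod p} (hA : A ∉ Y) (d : Option (ZMod p)) :
    Even ((Y.filter (fun Q => key A Q = d)).card) := by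
  rcases Finset.eq_empty_or_nonempty (Y.filter (fun Q => key A Q = d)) with h | h
  · rw [h]; simp
  obtain ⟨Q, hQmem⟩ := h
  simp only [Finset.mem_filter] at hQmem
  obtain ⟨hQY, hQkey⟩ := hQmem
  have hQA : Q ≠ A := fun h => hA (h ▸ hQY)
  have hQl : lineF A d Q := (lineF_iff_key hQA d).mpr hQkey
  have hset : Y.filter (fun R => key A R = d) =
      insert Q ((Y.erase Q).filter (fun R => key Q R = d)) := by
    ext R
    simp only [Finset.mem_filter, Finset.mem_insert, Finset.mem_erase]
    constructor
    · intro ⟨hRY, hRkey⟩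
      by_cases hRQ : R = Q
      · exact Or.inl hRQ
      · refine Or.inr ⟨⟨hRQ, hRY⟩, ?_⟩
        have hRA : R ≠ A := fun h => hA (h ▸ hRY)
        have hRl : lineF A d R := (lineF_iff_key hRA d).mpr hRkey
        have : lineF Q d R := (lineF_trans hQl R).mpr hRl
        exact (lineF_iff_key hRQ d).mp this
    · intro h
      rcases h with rfl | ⟨⟨hRQ, hRY⟩, hRkey⟩
      · exact ⟨hQY, hQkey⟩
      · refine ⟨hRY, ?_⟩
        have hRl : lineF Q d R := (lineF_iff_key hRQ d).mpr hRkey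
        have hRl' : lineF A d R := (lineF_trans hQl R).mp hRl
        have hRA : R ≠ A := fun h => hA (h ▸ hRY)
        exact (lineF_iff_key hRA d).mp hRl'
  rw [hset, Finset.card_insert_of_notMem (by
    simp only [Finset.mem_filter, Finset.mem_erase]
    rintro ⟨⟨h, -⟩, -⟩
    exact h rfl)]
  rw [fiber_card_eq_one hY3 hcard hQY d]
  exact even_two

lemma card_le_upper (hodd : Odd p) (Y : Finset (ZMod p × ZMod p))
    (hY3 : ∀ Q ∈ Y, ∀ R ∈ Y, ∀ S ∈ Y, Col Q R S → Q = R ∨ Q = S ∨ R = S) :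
    Y.card ≤ p + 1 := by
  by_contra h
  push_neg at h
  obtain ⟨Z, hZY, hZcard⟩ := Finset.exists_subset_card_eq (show p + 2 ≤ Y.card by omega)
  have hZ3 : ∀ Q ∈ Z, ∀ R ∈ Z, ∀ S ∈ Z, Col Q R S → Q = R ∨ Q = S ∨ R = S :=
    fun Q hQ R hR S hS => hY3 Q (hZY hQ) R (hZY hR) S (hZY hS)
  -- find a point outside Z
  have hp3 : 3 ≤ p := by
    rcases hodd with ⟨k, hk⟩
    have := hpf.out.two_le
    omega
  have hcompl : Zᶜ.Nonempty := by
    rw [← Finset.card_pos, Finset.card_compl, hZcard]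
    have hcard2 : Fintype.card (ZMod p × ZMod p) = p * p := by simp [ZMod.card]
    rw [hcard2]
    have : p + 2 < p * p := by nlinarith
    omega
  obtain ⟨A, hA⟩ := hcompl
  have hAZ : A ∉ Z := Finset.mem_compl.mp hA
  have hsum : Z.card = ∑ d : Option (ZMod p),
      (Z.filter (fun Q => key A Q = d)).card :=
    Finset.card_eq_sum_card_fiberwise (fun x _ => Finset.mem_univ _)
  have heven : Even (Z.card) := by
    rw [hsum]
    exact Finset.even_sum _ (fun d _ => fiberA_even hZ3 hZcard hAZ d)
  rw [hZcard] at heven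
  rcases hodd with ⟨k, hk⟩
  rcases heven with ⟨j, hj⟩
  omega

/-! ### The lower bound: a conic -/

lemma quad_roots {K : Type*} [Field K] {α β γ x y z : K}
    (hxy : x ≠ y) (hxz : x ≠ z) (hyz : y ≠ z)
    (hx : α * x ^ 2 + β * x + γ = 0) (hy : α * y ^ 2 + β * y + γ = 0)
    (hz : α * z ^ 2 + β * z + γ = 0) : α = 0 := by
  have h1 : (x - y) * (α * (x + y) + β) = 0 := by linear_combination hx - hy
  have h2 : (x - z) * (α * (x + z) + β) = 0 := by linear_combination hx - hz
  have h1' : α * (x + y) + β = 0 := by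
    rcases mul_eq_zero.mp h1 with h | h
    · exact absurd (sub_eq_zero.mp h) hxy
    · exact h
  have h2' : α * (x + z) + β = 0 := by
    rcases mul_eq_zero.mp h2 with h | h
    · exact absurd (sub_eq_zero.mp h) hxz
    · exact h
  have h3 : α * (y - z) = 0 := by linear_combination h1' - h2'
  rcases mul_eq_zero.mp h3 with h | h
  · exact h
  · exact absurd (sub_eq_zero.mp h) hyz

/-- Three distinct points on the conic `x² - d y² = 1` (`d` nonsquare) are
never collinear. -/
lemma conic_no_col {d : ZMod p} (hd : ¬ IsSquare d)
    {Q R S : ZMod p × ZMod p}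
    (hQ : Q.1 ^ 2 - d * Q.2 ^ 2 = 1) (hR : R.1 ^ 2 - d * R.2 ^ 2 = 1)
    (hS : S.1 ^ 2 - d * S.2 ^ 2 = 1) (hcol : Col Q R S) :
    Q = R ∨ Q = S ∨ R = S := by
  by_contra hne
  push_neg at hne
  obtain ⟨hQR, hQS, hRS⟩ := hne
  have hd0 : d ≠ 0 := fun h => hd (h ▸ ⟨0, by ring⟩)
  -- find a direction d0 through Q containing R and S
  obtain ⟨e, hQl, hRl, hSl⟩ :
      ∃ e : Option (ZMod p), lineF Q e Q ∧ lineF Q e R ∧ lineF Q e S := by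
    by_cases h1 : R.1 = Q.1
    · refine ⟨none, lineF_self Q none, h1, ?_⟩
      have hy : R.2 ≠ Q.2 := fun h => hQR (Prod.ext h1 h).symm
      have : (R.2 - Q.2) * (S.1 - Q.1) = 0 := by
        rw [← hcol, h1]; ring
      rcases mul_eq_zero.mp this with h | h
      · exact absurd (sub_eq_zero.mp h) hy
      · exact sub_eq_zero.mp h
    · have hne1 : R.1 - Q.1 ≠ 0 := sub_ne_zero.mpr h1
      refine ⟨some ((R.2 - Q.2) / (R.1 - Q.1)), lineF_self Q _, ?_, ?_⟩
      · simp only [lineF]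
        rw [div_mul_cancel₀ _ hne1]
      · simp only [lineF]
        rw [div_mul_eq_mul_div, eq_div_iff hne1,
          mul_comm (S.2 - Q.2) (R.1 - Q.1)]
        exact hcol
  cases e with
  | none =>
    -- vertical line: y-coords distinct, roots of y² = Q.1²-1)/d ... use quad
    simp only [lineF] at hQl hRl hSl
    have hy1 : Q.2 ≠ R.2 := fun h => hQR (Prod.ext hRl.symm h)
    have hy2 : Q.2 ≠ S.2 := fun h => hQS (Prod.ext hSl.symm h)
    have hy3 : R.2 ≠ S.2 := fun h => hRS (Prod.ext (hRl.trans hSl.symm) h)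
    have e1 : (-d) * Q.2 ^ 2 + 0 * Q.2 + (Q.1 ^ 2 - 1) = 0 := by
      linear_combination hQ
    have e2 : (-d) * R.2 ^ 2 + 0 * R.2 + (Q.1 ^ 2 - 1) = 0 := by
      linear_combination hR - (R.1 + Q.1) * hRl
    have e3 : (-d) * S.2 ^ 2 + 0 * S.2 + (Q.1 ^ 2 - 1) = 0 := by
      linear_combination hS - (S.1 + Q.1) * hSl
    have hnd := quad_roots hy1 hy2 hy3 e1 e2 e3
    exact hd0 (neg_eq_zero.mp hnd)
  | some m =>
    simp only [lineF] at hQl hRl hSl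
    set c0 : ZMod p := Q.2 - m * Q.1 with hc0
    have hQy : Q.2 = m * Q.1 + c0 := by rw [hc0]; ring
    have hRy : R.2 = m * R.1 + c0 := by rw [hc0]; linear_combination hRl
    have hSy : S.2 = m * S.1 + c0 := by rw [hc0]; linear_combination hSl
    have hx1 : Q.1 ≠ R.1 := by
      intro h
      exact hQR (Prod.ext h (by rw [hQy, hRy, h]))
    have hx2 : Q.1 ≠ S.1 := by
      intro h
      exact hQS (Prod.ext h (by rw [hQy, hSy, h]))
    have hx3 : R.1 ≠ S.1 := by
      intro h
      exact hRS (Prod.ext h (by rw [hRy, hSy, h]))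
    have e1 : (1 - d * m ^ 2) * Q.1 ^ 2 + (-(2 * d * m * c0)) * Q.1 +
        (-(d * c0 ^ 2) - 1) = 0 := by
      linear_combination hQ + d * (Q.2 + m * Q.1 + c0) * hQy
    have e2 : (1 - d * m ^ 2) * R.1 ^ 2 + (-(2 * d * m * c0)) * R.1 +
        (-(d * c0 ^ 2) - 1) = 0 := by
      linear_combination hR + d * (R.2 + m * R.1 + c0) * hRy
    have e3 : (1 - d * m ^ 2) * S.1 ^ 2 + (-(2 * d * m * c0)) * S.1 +
        (-(d * c0 ^ 2) - 1) = 0 := by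
      linear_combination hS + d * (S.2 + m * S.1 + c0) * hSy
    have hα := quad_roots hx1 hx2 hx3 e1 e2 e3
    -- 1 = d * m², so d is a square
    have hm0 : m ≠ 0 := by
      intro h
      rw [h] at hα
      exact one_ne_zero (α := ZMod p) (by linear_combination hα)
    exact hd ⟨m⁻¹, by field_simp; linear_combination -hα⟩

end TauAux

/-- Theorem 4.6: for an odd prime p, τ(T_{p×p}) = p + 1. -/
theorem tau_prime_torus (p : ℕ) (hp : p.Prime) (hodd : Odd p) :
    tau p p = p + 1 := by
  haveI hpf : Fact p.Prime := ⟨hp⟩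
  haveI : NeZero p := ⟨hp.ne_zero⟩
  have hp2 : p ≠ 2 := by
    rintro rfl
    exact (Nat.not_odd_iff_even.mpr even_two) hodd
  have hchar : ringChar (ZMod p) ≠ 2 := by
    rw [ZMod.ringChar_zmod_n]; exact hp2
  have h2 : (2 : ZMod p) ≠ 0 := Ring.two_ne_zero hchar
  -- upper bound for every admissible set
  have hub : ∀ k ∈ {k : ℕ | ∃ X : Set (ZMod p × ZMod p),
      NoThreeInLine p p X ∧ X.ncard = k}, k ≤ p + 1 := by
    rintro k ⟨X, hX, rfl⟩
    have hXf : X.Finite := Set.toFinite X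
    rw [Set.ncard_eq_toFinset_card X hXf]
    apply TauAux.card_le_upper hodd
    intro Q hQ R hR S hS hcol
    rw [Set.Finite.mem_toFinset] at hQ hR hS
    exact (TauAux.noThree_iff X).mp hX Q hQ R hR S hS hcol
  -- the conic giving the lower bound
  obtain ⟨d, hd⟩ := FiniteField.exists_nonsquare (F := ZMod p) hchar
  have hden : ∀ t : ZMod p, 1 - d * t ^ 2 ≠ 0 := by
    intro t h
    have ht : t ≠ 0 := by
      rintro rfl
      apply one_ne_zero (α := ZMod p)
      linear_combination h
    exact hd ⟨t⁻¹, by field_simp; linear_combination -h⟩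
  set f : Option (ZMod p) → ZMod p × ZMod p := fun i =>
    match i with
    | none => (-1, 0)
    | some t => ((1 + d * t ^ 2) / (1 - d * t ^ 2), 2 * t / (1 - d * t ^ 2))
    with hf
  have hconic : ∀ i, (f i).1 ^ 2 - d * (f i).2 ^ 2 = 1 := by
    intro i
    cases i with
    | none => simp [hf]
    | some t =>
      have h0 := hden t
      simp only [hf]
      field_simp
      ring
  have hx1 : ∀ t : ZMod p, (f (some t)).1 + 1 = 2 / (1 - d * t ^ 2) := by
    intro t
    have h0 := hden t
    simp only [hf]
    field_simp
    ring
  have hne0 : ∀ t : ZMod p, (f (some t)).1 + 1 ≠ 0 := by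
    intro t
    rw [hx1 t]
    exact div_ne_zero h2 (hden t)
  have hg : ∀ t : ZMod p, (f (some t)).2 / ((f (some t)).1 + 1) = t := by
    intro t
    have h0 := hden t
    rw [hx1 t]
    simp only [hf]
    field_simp
    have h0' : 1 - t ^ 2 * d ≠ 0 := by intro h; apply h0; linear_combination h
    rw [mul_div_assoc, div_self h0', mul_one]
  have hinj : Function.Injective f := by
    intro i j hij
    match i, j with
    | none, none => rfl
    | none, some t =>
      exfalso
      apply hne0 t
      rw [← hij]
      simp [hf]
    | some t, none =>
      exfalso
      apply hne0 t
      rw [hij]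
      simp [hf]
    | some t, some s =>
      have hts : t = s := by rw [← hg t, ← hg s, hij]
      rw [hts]
  have hmem : p + 1 ∈ {k : ℕ | ∃ X : Set (ZMod p × ZMod p),
      NoThreeInLine p p X ∧ X.ncard = k} := by
    refine ⟨Set.range f, ?_, ?_⟩
    · rw [TauAux.noThree_iff]
      rintro A ⟨i, rfl⟩ B ⟨j, rfl⟩ C ⟨k, rfl⟩ hcol
      exact TauAux.conic_no_col hd (hconic i) (hconic j) (hconic k) hcol
    · have hrange : Set.range f = ↑(Finset.univ.image f) := by simp
      rw [hrange, Set.ncard_coe_finset, Finset.card_image_of_injective _ hinj,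
        Finset.card_univ, Fintype.card_option, ZMod.card]
  exact le_antisymm (csSup_le ⟨p + 1, hmem⟩ hub)
    (le_csSup ⟨p + 1, fun k hk => hub k hk⟩ hmem)
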